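/- Let φ be a substitution of constant length k ≥ 2 and let z ∈ A^ℤ satisfy z = T^c(φ(z)) for some 0 ≤ c < k. Then the k-kernel of z is contained in the finite set {Ψ(z) : Ψ ∈ F} ∪ {Ψ(T(z)) : Ψ ∈ F}, where F is the (finite) union of all families F_{φ,m}; consequently z is k-automatic. -/

import Mathlib

/-- The extension of a substitution `φ : A → A*` to finite words, by concatenation. -/
def substWord {A : Type*} (φ : A → List A) (w : List A) : List A := w.flatMap φ

/-- The extension of a substitution of constant length `k` to biinfinite sequences:
position `0` of the image is the start of `φ(x 0)`. -/
def substZ {A : Type*} [Inhabited A] (φ : A → List A) (k : ℕ) (x : ℤ → A) : ℤ → A :=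
  fun n => (φ (x (Int.fdiv n (k : ℤ)))).getD (Int.fmod n (k : ℤ)).toNat default

/-- The shift `T^c` on biinfinite sequences (`T` is the left shift). -/
def shiftZ {A : Type*} (c : ℤ) (x : ℤ → A) : ℤ → A := fun n => x (n + c)

/-- The composition `Ψ_{i_{m-1}} ∘ ⋯ ∘ Ψ_{i_0}` of the column maps of a substitution of
constant length `k`, where `Ψ_i` sends a letter `a` to the `i`-th letter of `φ(a)`. -/
def psiWord {A : Type*} [Inhabited A] (φ : A → List A) {m k : ℕ} (i : Fin m → Fin k) : A → A :=
  fun a => (List.ofFn i).foldl (fun b j => (φ b).getD (j : ℕ) default) a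

/-- The `k`-kernel of a biinfinite sequence `x`: the set of subsequences
`n ↦ x (k^m * n + j)` for `m ≥ 0` and `0 ≤ j < k^m`. -/
def kernelK {A : Type*} (k : ℕ) (x : ℤ → A) : Set (ℤ → A) :=
  {y | ∃ (m j : ℕ), j < k ^ m ∧ y = fun n => x ((k : ℤ) ^ m * n + (j : ℤ))}

lemma psiWord_snoc {A : Type*} [Inhabited A] (φ : A → List A) {m k : ℕ}
    (i : Fin m → Fin k) (r : Fin k) (a : A) :
    psiWord φ (Fin.snoc i r) a = (φ (psiWord φ i a)).getD (r : ℕ) default := by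
  have h : List.ofFn (Fin.snoc i r) = List.ofFn i ++ [r] := by
    rw [List.ofFn_succ']
    simp
  unfold psiWord
  rw [h]
  simp [List.foldl_append]

lemma subst_step {A : Type*} [Inhabited A] (φ : A → List A) (k : ℕ) (hk : 0 < k)
    (z : ℤ → A) (c : ℕ) (hz : z = shiftZ (c : ℤ) (substZ φ k z))
    (N M : ℤ) (r : ℕ) (hr : r < k) (hNM : N + c = k * M + r) :
    z N = (φ (z M)).getD r default := by
  conv_lhs => rw [hz]
  have hk' : (0:ℤ) < (k:ℤ) := by exact_mod_cast hk
  simp only [shiftZ, substZ]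
  have hfd : Int.fdiv (N + c) k = M := by
    rw [hNM, Int.fdiv_eq_ediv_of_nonneg _ hk'.le,
      show (k:ℤ) * M + r = (r:ℤ) + M * k by ring,
      Int.add_mul_ediv_right _ _ hk'.ne',
      Int.ediv_eq_zero_of_lt (by positivity) (by exact_mod_cast hr)]
    ring
  have hfm : Int.fmod (N + c) k = (r:ℤ) := by
    rw [hNM, Int.fmod_eq_emod_of_nonneg _ hk'.le,
      show (k:ℤ) * M + r = (r:ℤ) + M * k by ring, Int.add_mul_emod_self_right,
      Int.emod_eq_of_lt (by positivity) (by exact_mod_cast hr)]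
  rw [hfd, hfm]
  simp

lemma key_lemma {A : Type*} [Inhabited A] (φ : A → List A) (k : ℕ) (hk : 2 ≤ k)
    (z : ℤ → A) (c : ℕ) (hc : c < k) (hz : z = shiftZ (c : ℤ) (substZ φ k z)) :
    ∀ m j, j < k ^ m → ∃ (i : Fin m → Fin k) (e : ℕ), e ≤ 1 ∧ (j = 0 → e = 0) ∧
      ∀ n : ℤ, z ((k:ℤ) ^ m * n + (j:ℤ)) = psiWord φ i (z (n + (e:ℤ))) := by
  have hk0 : 0 < k := by omega
  intro m
  induction m with
  | zero =>
    intro j hj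
    rw [pow_zero] at hj
    obtain rfl : j = 0 := by omega
    exact ⟨Fin.elim0, 0, Nat.zero_le 1, fun _ => rfl, fun n => by simp [psiWord]⟩
  | succ m ih =>
    intro j hj
    set q := (j + c) / k with hq
    set r := (j + c) % k with hrdef
    have hr : r < k := Nat.mod_lt _ hk0
    have hqr : k * q + r = j + c := Nat.div_add_mod _ _
    have hqle : q ≤ k ^ m := by
      have : j + c < (k ^ m + 1) * k := by
        have : k ^ (m+1) = k ^ m * k := pow_succ k m
        nlinarith [pow_pos hk0 m]
      have := (Nat.div_lt_iff_lt_mul hk0).mpr this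
      omega
    have hstep : ∀ n : ℤ, z ((k:ℤ) ^ (m+1) * n + (j:ℤ)) =
        (φ (z ((k:ℤ) ^ m * n + (q:ℤ)))).getD r default := by
      intro n
      apply subst_step φ k hk0 z c hz _ _ r hr
      push_cast
      have : (k:ℤ) * q + r = (j:ℤ) + c := by exact_mod_cast hqr
      ring_nf
      ring_nf at this
      linarith [this]
    rcases lt_or_eq_of_le hqle with hlt | heq
    · obtain ⟨i, e, he1, he0, hi⟩ := ih q hlt
      refine ⟨Fin.snoc i ⟨r, hr⟩, e, he1, ?_, ?_⟩
      · intro hj0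
        apply he0
        subst hj0
        simp [hq, Nat.div_eq_of_lt hc]
      · intro n
        rw [hstep n, hi n, psiWord_snoc]
    · obtain ⟨i, e, he1, he0, hi⟩ := ih 0 (pow_pos hk0 m)
      have he : e = 0 := he0 rfl
      subst he
      refine ⟨Fin.snoc i ⟨r, hr⟩, 1, le_refl _, ?_, ?_⟩
      · intro hj0
        exfalso
        subst hj0
        have : q = 0 := by simp [hq, Nat.div_eq_of_lt hc]
        have := pow_pos hk0 m
        omega
      · intro n
        rw [hstep n, psiWord_snoc]
        have h1 := hi (n + 1)
        simp only [Nat.cast_zero, add_zero] at h1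
        have harg : ((k:ℤ) ^ m * n + (q:ℤ)) = (k:ℤ) ^ m * (n + 1) := by
          push_cast [heq]; ring
        rw [harg, h1]
        norm_num

/-- Let `φ` be a substitution of constant length `k ≥ 2` on a finite alphabet and let
`z ∈ A^ℤ` satisfy `z = T^c(φ(z))` for some `0 ≤ c < k`. Then the `k`-kernel of `z` is
contained in the finite set `{Ψ(z) : Ψ ∈ F} ∪ {Ψ(T(z)) : Ψ ∈ F}`, where `F` is the union
of all families `F_{φ,m}`; consequently the `k`-kernel of `z` is finite, i.e. `z` is
`k`-automatic. -/
theorem kernel_of_quasiFixed_period_one {A : Type*} [Inhabited A] [Fintype A]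
    (φ : A → List A) (k : ℕ) (hk : 2 ≤ k) (hlen : ∀ a, (φ a).length = k)
    (z : ℤ → A) (c : ℕ) (hc : c < k) (hz : z = shiftZ (c : ℤ) (substZ φ k z)) :
    kernelK k z ⊆
      ({y : ℤ → A | ∃ (m : ℕ) (i : Fin m → Fin k), y = fun n => psiWord φ i (z n)} ∪
       {y : ℤ → A | ∃ (m : ℕ) (i : Fin m → Fin k), y = fun n => psiWord φ i (shiftZ 1 z n)}) ∧
    Set.Finite
      ({y : ℤ → A | ∃ (m : ℕ) (i : Fin m → Fin k), y = fun n => psiWord φ i (z n)} ∪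
       {y : ℤ → A | ∃ (m : ℕ) (i : Fin m → Fin k), y = fun n => psiWord φ i (shiftZ 1 z n)}) ∧
    (kernelK k z).Finite := by
  have hsub : kernelK k z ⊆
      ({y : ℤ → A | ∃ (m : ℕ) (i : Fin m → Fin k), y = fun n => psiWord φ i (z n)} ∪
       {y : ℤ → A | ∃ (m : ℕ) (i : Fin m → Fin k), y = fun n => psiWord φ i (shiftZ 1 z n)}) := by
    rintro y ⟨m, j, hj, rfl⟩
    obtain ⟨i, e, he1, -, hi⟩ := key_lemma φ k hk z c hc hz m j hj
    interval_cases e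
    · left
      exact ⟨m, i, by funext n; simpa using hi n⟩
    · right
      exact ⟨m, i, by funext n; simpa [shiftZ] using hi n⟩
  have hfin : Set.Finite
      ({y : ℤ → A | ∃ (m : ℕ) (i : Fin m → Fin k), y = fun n => psiWord φ i (z n)} ∪
       {y : ℤ → A | ∃ (m : ℕ) (i : Fin m → Fin k), y = fun n => psiWord φ i (shiftZ 1 z n)}) := by
    apply Set.Finite.union
    · apply Set.Finite.subset (Set.finite_range (fun f : A → A => (fun n : ℤ => f (z n))))
      rintro y ⟨m, i, rfl⟩
      exact ⟨psiWord φ i, rfl⟩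
    · apply Set.Finite.subset (Set.finite_range (fun f : A → A => (fun n : ℤ => f (shiftZ 1 z n))))
      rintro y ⟨m, i, rfl⟩
      exact ⟨psiWord φ i, rfl⟩
  exact ⟨hsub, hfin, hfin.subset hsub⟩
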